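/- Let κ be an infinite cardinal, X a Banach space, Y ⊆ X a closed subspace, y* ∈ S_{Y*}, and suppose every x* ∈ E(y*) (the set of norm-one extensions of y* to X) has character κ in B_{X*} with the weak* topology. Then for every closed subspace W with Y ⊆ W ⊆ X of density < κ, every w* ∈ S_{W*} with w*|Y = y*, and every linearly dense subset D ⊆ X, there exists d ∈ D such that the set [w*](d) = {x*(d) : x* ∈ S_{X*}, x*|W = w*} contains a nondegenerate interval of ℝ. -/

import Mathlib

open Cardinal Set

universe u

/-- The density character of a topological space: the least cardinality of a dense subset. -/
noncomputable def dens (X : Type u) [TopologicalSpace X] : Cardinal.{u} :=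
  ⨅ s : {s : Set X // Dense s}, Cardinal.mk ↥(s.1)

/-- A set is linearly dense if its closed linear span is the whole space. -/
def LinearlyDense {X : Type u} [NormedAddCommGroup X] [NormedSpace ℝ X] (S : Set X) : Prop :=
  (Submodule.span ℝ S).topologicalClosure = ⊤

/-- A set `Y` is overcomplete in `X` if `|Y| = dens X` and every subset of `Y` of full
cardinality is linearly dense in `X`. -/
def Overcomplete {X : Type u} [NormedAddCommGroup X] [NormedSpace ℝ X] (Y : Set X) : Prop :=
  Cardinal.mk ↥Y = dens X ∧ ∀ Z ⊆ Y, Cardinal.mk ↥Z = Cardinal.mk ↥Y → LinearlyDense Z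

/-- The character of the point `x` relative to the subspace `A ⊆ T` (with the subspace
topology): the least cardinality of a family `B` of open neighbourhoods of `x` such that
every open neighbourhood of `x` contains some `V ∩ A` with `V ∈ B`. -/
noncomputable def relChar {T : Type u} [TopologicalSpace T] (A : Set T) (x : T) : Cardinal.{u} :=
  sInf {c | ∃ B : Set (Set T), Cardinal.mk ↥B = c ∧ (∀ V ∈ B, x ∈ V ∧ IsOpen V) ∧
    ∀ U : Set T, IsOpen U → x ∈ U → ∃ V ∈ B, V ∩ A ⊆ U}

/-- The closed unit ball of the dual of `X`, as a subset of the weak* dual. -/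
def dualBall (X : Type u) [NormedAddCommGroup X] [NormedSpace ℝ X] : Set (WeakDual ℝ X) :=
  {φ | ‖WeakDual.toStrongDual φ‖ ≤ 1}

lemma isCompact_dualBall (X : Type u) [NormedAddCommGroup X] [NormedSpace ℝ X] :
    IsCompact (dualBall X) := by
  have h : dualBall X = WeakDual.toStrongDual ⁻¹' Metric.closedBall 0 1 := by
    ext ψ; simp [dualBall, mem_closedBall_zero_iff]
  rw [h]
  exact WeakDual.isCompact_closedBall (𝕜 := ℝ) 0 1

lemma eq_zero_of_abs_le_one_div (d : ℝ) (h : ∀ n : ℕ, |d| ≤ 1 / (n + 1)) : d = 0 := by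
  have h0 : |d| ≤ 0 :=
    ge_of_tendsto' tendsto_one_div_add_atTop_nhds_zero_nat h
  exact abs_nonpos_iff.mp h0

lemma relChar_le_finsets {X : Type u} [NormedAddCommGroup X] [NormedSpace ℝ X]
    (W : Submodule ℝ X) (φ : X →L[ℝ] ℝ) (s : Set ↥W)
    (huniq : ∀ ψ : WeakDual ℝ X, ψ ∈ dualBall X →
      (∀ w ∈ s, ψ (w : X) = φ (w : X)) → ψ = StrongDual.toWeakDual φ) :
    relChar (dualBall X) (StrongDual.toWeakDual φ) ≤
      Cardinal.mk (Finset (↥s × ℕ)) := by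
  classical
  set φ' := StrongDual.toWeakDual φ with hφ'
  let V : Finset (↥s × ℕ) → Set (WeakDual ℝ X) := fun t =>
    ⋂ p ∈ t, {ψ : WeakDual ℝ X | |ψ ((p.1 : ↥W) : X) - φ ((p.1 : ↥W) : X)| < 1 / (p.2 + 1)}
  have hVopen : ∀ t, IsOpen (V t) := by
    intro t
    apply isOpen_biInter_finset
    intro p _
    exact isOpen_lt (((WeakDual.eval_continuous ((p.1 : ↥W) : X)).sub continuous_const).abs)
      continuous_const
  have hVmem : ∀ t, φ' ∈ V t := by
    intro t
    refine Set.mem_iInter₂.mpr fun p _ => ?_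
    have : φ' (((p.1 : ↥W) : X)) = φ ((p.1 : ↥W) : X) := rfl
    simp only [Set.mem_setOf_eq, this, sub_self, abs_zero]
    positivity
  refine le_trans (csInf_le' ⟨Set.range V, rfl, ?_, ?_⟩) Cardinal.mk_range_le
  · rintro _ ⟨t, rfl⟩
    exact ⟨hVmem t, hVopen t⟩
  · intro U hU hφU
    set C : ↥s × ℕ → Set (WeakDual ℝ X) := fun p =>
      {ψ : WeakDual ℝ X | |ψ ((p.1 : ↥W) : X) - φ ((p.1 : ↥W) : X)| ≤ 1 / (p.2 + 1)} with hC
    have hCclosed : ∀ p, IsClosed (C p) := by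
      intro p
      exact isClosed_le (((WeakDual.eval_continuous _).sub continuous_const).abs)
        continuous_const
    have hKcomp : IsCompact (dualBall X ∩ Uᶜ) :=
      (isCompact_dualBall X).inter_right hU.isClosed_compl
    have hempty : (dualBall X ∩ Uᶜ) ∩ ⋂ p, C p = ∅ := by
      rw [Set.eq_empty_iff_forall_notMem]
      rintro ψ ⟨⟨hb, hnU⟩, hCmem⟩
      have hag : ∀ w ∈ s, ψ (w : X) = φ (w : X) := by
        intro w hw
        have habs : ∀ n : ℕ, |ψ (w : X) - φ (w : X)| ≤ 1 / (n + 1) := by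
          intro n
          exact Set.mem_iInter.mp hCmem (⟨w, hw⟩, n)
        have := eq_zero_of_abs_le_one_div _ habs
        linarith [this]
      have := huniq ψ hb hag
      rw [this] at hnU
      exact hnU hφU
    obtain ⟨t, ht⟩ := hKcomp.elim_finite_subfamily_closed C hCclosed hempty
    refine ⟨V t, Set.mem_range_self t, ?_⟩
    rintro ψ ⟨hV, hb⟩
    by_contra hnU
    have hmem : ψ ∈ (dualBall X ∩ Uᶜ) ∩ ⋂ p ∈ t, C p := by
      refine ⟨⟨hb, hnU⟩, Set.mem_iInter₂.mpr fun p hp => ?_⟩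
      simp only [V, Set.mem_iInter, Set.mem_setOf_eq] at hV
      simp only [C, Set.mem_setOf_eq]
      exact (hV p hp).le
    rw [ht] at hmem
    exact hmem

lemma interval_sub {X : Type u} [NormedAddCommGroup X] [NormedSpace ℝ X]
    (W : Submodule ℝ X) (ws : W →L[ℝ] ℝ) (hws : ‖ws‖ = 1)
    (φ₁ φ₂ : X →L[ℝ] ℝ) (h₁ : ‖φ₁‖ = 1) (h₂ : ‖φ₂‖ = 1)
    (he₁ : ∀ w : W, φ₁ (w : X) = ws w) (he₂ : ∀ w : W, φ₂ (w : X) = ws w) (d : X) :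
    Set.Ioo (φ₁ d) (φ₂ d) ⊆
      {r : ℝ | ∃ φ : X →L[ℝ] ℝ, ‖φ‖ = 1 ∧ (∀ w : W, φ (w : X) = ws w) ∧ φ d = r} := by
  intro r hr
  have hab : φ₁ d < φ₂ d := lt_trans hr.1 hr.2
  set a := φ₁ d with ha
  set b := φ₂ d with hb
  have hba : 0 < b - a := sub_pos.2 hab
  set t := (b - r) / (b - a) with htdef
  have ht0 : 0 ≤ t := div_nonneg (by linarith [hr.2]) hba.le
  have ht1 : t ≤ 1 := (div_le_one hba).2 (by linarith [hr.1])
  set φ := t • φ₁ + (1 - t) • φ₂ with hφdef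
  have happly : ∀ x : X, φ x = t * φ₁ x + (1 - t) * φ₂ x := by
    intro x
    simp [hφdef, ContinuousLinearMap.add_apply, ContinuousLinearMap.smul_apply, smul_eq_mul]
  have hext : ∀ w : W, φ (w : X) = ws w := by
    intro w
    rw [happly, he₁, he₂]; ring
  have hnormle : ‖φ‖ ≤ 1 := by
    calc ‖φ‖ ≤ ‖t • φ₁‖ + ‖(1 - t) • φ₂‖ := norm_add_le _ _
    _ ≤ ‖t‖ * ‖φ₁‖ + ‖1 - t‖ * ‖φ₂‖ :=
        add_le_add (ContinuousLinearMap.opNorm_smul_le _ _)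
          (ContinuousLinearMap.opNorm_smul_le _ _)
    _ = 1 := by
        rw [h₁, h₂, Real.norm_eq_abs, Real.norm_eq_abs, abs_of_nonneg ht0,
          abs_of_nonneg (by linarith : (0:ℝ) ≤ 1 - t)]
        ring
  have hnormge : 1 ≤ ‖φ‖ := by
    rw [← hws]
    refine ContinuousLinearMap.opNorm_le_bound ws (norm_nonneg φ) fun w => ?_
    rw [← hext w]
    calc ‖φ (w : X)‖ ≤ ‖φ‖ * ‖(w : X)‖ := φ.le_opNorm _
    _ = ‖φ‖ * ‖w‖ := rfl
  refine ⟨φ, le_antisymm hnormle hnormge, hext, ?_⟩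
  rw [happly]
  rw [← ha, ← hb]
  have hcancel : t * (b - a) = b - r := div_mul_cancel₀ _ hba.ne'
  nlinarith [hcancel]

/-- if every norm-one extension of `y*` to `X` has character `κ` in the dual
ball, then for every intermediate closed subspace `W` of density `< κ`, every norm-one
`w* ∈ S_{W*}` extending `y*`, and every linearly dense `D ⊆ X`, there is `d ∈ D` such that
`[w*](d)` contains a nondegenerate interval. -/
theorem stmt8 {X : Type u} [NormedAddCommGroup X] [NormedSpace ℝ X] [CompleteSpace X]
    {κ : Cardinal.{u}} (hκ : Cardinal.aleph0 ≤ κ)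
    (Y : Submodule ℝ X) (hYc : IsClosed (Y : Set X))
    (ys : Y →L[ℝ] ℝ) (hys : ‖ys‖ = 1)
    (hchar : ∀ φ : X →L[ℝ] ℝ, ‖φ‖ = 1 → (∀ y : Y, φ (y : X) = ys y) →
      relChar (dualBall X) (StrongDual.toWeakDual φ) = κ)
    (W : Submodule ℝ X) (hYW : Y ≤ W) (hWc : IsClosed (W : Set X)) (hWd : dens W < κ)
    (ws : W →L[ℝ] ℝ) (hws : ‖ws‖ = 1)
    (hres : ∀ y : Y, ws ⟨y.1, hYW y.2⟩ = ys y)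
    (D : Set X) (hD : LinearlyDense D) :
    ∃ d ∈ D, ∃ a b : ℝ, a < b ∧ Set.Ioo a b ⊆
      {r : ℝ | ∃ φ : X →L[ℝ] ℝ, ‖φ‖ = 1 ∧ (∀ w : W, φ (w : X) = ws w) ∧ φ d = r} := by
  classical
  haveI : Nonempty ↥W := ⟨0⟩
  haveI hne : Nonempty {s : Set ↥W // Dense s} := ⟨⟨Set.univ, dense_univ⟩⟩
  have hmem : dens ↥W ∈ Set.range (fun p : {s : Set ↥W // Dense s} => Cardinal.mk ↥p.1) := by
    rw [dens, iInf]
    exact csInf_mem (Set.range_nonempty _)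
  obtain ⟨⟨s, hsdense⟩, hsmk⟩ := hmem
  simp only at hsmk
  -- density of W is infinite
  have hinfW : Cardinal.aleph0 ≤ dens ↥W := by
    by_contra hfin
    push_neg at hfin
    have hsfin : s.Finite := by
      rw [← Set.finite_coe_iff]
      exact Cardinal.lt_aleph0_iff_finite.mp (by rw [hsmk]; exact hfin)
    have huniv : s = Set.univ := hsfin.isClosed.closure_eq ▸ hsdense.closure_eq
    haveI hWfin : Finite ↥W := Set.finite_univ_iff.mp (huniv ▸ hsfin)
    have hallzero : ∀ w : ↥W, w = 0 := by
      intro w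
      by_contra hw
      have hinj : Function.Injective (fun r : ℝ => r • w) := smul_left_injective ℝ hw
      haveI := Infinite.of_injective _ hinj
      exact not_finite ↥W
    have hwsle : ‖ws‖ ≤ 0 :=
      ContinuousLinearMap.opNorm_le_bound ws le_rfl fun w => by
        rw [hallzero w]; simp
    rw [hws] at hwsle
    linarith
  -- there exist two distinct norm-one extensions of ws
  have key : ∃ φ₁ φ₂ : X →L[ℝ] ℝ,
      (‖φ₁‖ = 1 ∧ ∀ w : W, φ₁ (w : X) = ws w) ∧
      (‖φ₂‖ = 1 ∧ ∀ w : W, φ₂ (w : X) = ws w) ∧ φ₁ ≠ φ₂ := by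
    by_contra hcon
    push_neg at hcon
    obtain ⟨φ₀, hext, hnorm⟩ := exists_extension_norm_eq W ws
    rw [hws] at hnorm
    have hy : ∀ y : Y, φ₀ (y : X) = ys y := fun y =>
      (hext ⟨y.1, hYW y.2⟩).trans (hres y)
    have hκeq := hchar φ₀ hnorm hy
    have huniq : ∀ ψ : WeakDual ℝ X, ψ ∈ dualBall X →
        (∀ w ∈ s, ψ ((w : ↥W) : X) = φ₀ ((w : ↥W) : X)) →
        ψ = StrongDual.toWeakDual φ₀ := by
      intro ψ hψb hagree
      have h1 : Continuous fun w : ↥W => ψ (w : X) :=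
        (WeakDual.toStrongDual ψ).continuous.comp continuous_subtype_val
      have heqon : Set.EqOn (fun w : ↥W => ψ (w : X)) (fun w : ↥W => ws w) s := by
        intro w hw
        simp only
        rw [hagree w hw, hext w]
      have hfun := h1.ext_on hsdense ws.continuous heqon
      have hψext : ∀ w : W, (WeakDual.toStrongDual ψ) (w : X) = ws w := fun w =>
        congrFun hfun w
      have hψnorm : ‖WeakDual.toStrongDual ψ‖ = 1 := by
        refine le_antisymm hψb ?_
        rw [← hws]
        refine ContinuousLinearMap.opNorm_le_bound ws (norm_nonneg _) fun w => ?_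
        rw [← hψext w]
        exact ContinuousLinearMap.le_opNorm _ _
      have heq : φ₀ = WeakDual.toStrongDual ψ :=
        hcon φ₀ (WeakDual.toStrongDual ψ) ⟨hnorm, hext⟩ ⟨hψnorm, hψext⟩
      have h2 : StrongDual.toWeakDual φ₀ =
          StrongDual.toWeakDual (WeakDual.toStrongDual ψ) := congrArg _ heq
      rw [h2]
      rfl
    have hle := relChar_le_finsets W φ₀ s huniq
    haveI hnes : Nonempty ↥s := hsdense.nonempty.to_subtype
    haveI : Infinite (↥s × ℕ) := Prod.infinite_of_right
    have hcard : Cardinal.mk (Finset (↥s × ℕ)) = Cardinal.mk ↥s := by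
      rw [Cardinal.mk_finset_of_infinite]
      simp only [Cardinal.mk_prod, Cardinal.mk_nat, Cardinal.lift_id, Cardinal.lift_uzero,
        Cardinal.lift_aleph0]
      exact Cardinal.mul_eq_left (hsmk ▸ hinfW) (hsmk ▸ hinfW) Cardinal.aleph0_ne_zero
    rw [hcard, hsmk, hκeq] at hle
    exact absurd (lt_of_le_of_lt hle hWd) (lt_irrefl κ)
  obtain ⟨φ₁, φ₂, ⟨hn1, he1⟩, ⟨hn2, he2⟩, hne12⟩ := key
  have hd : ∃ d ∈ D, φ₁ d ≠ φ₂ d := by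
    by_contra h
    push_neg at h
    apply hne12
    have hsub : (Submodule.span ℝ D : Set X) ⊆ {x : X | φ₁ x = φ₂ x} := by
      intro x hx
      have hle' : Submodule.span ℝ D ≤
          LinearMap.eqLocus (φ₁ : X →ₗ[ℝ] ℝ) (φ₂ : X →ₗ[ℝ] ℝ) :=
        Submodule.span_le.2 fun d hd => h d hd
      exact hle' hx
    have hclosed : IsClosed {x : X | φ₁ x = φ₂ x} := isClosed_eq φ₁.continuous φ₂.continuous
    have hclsub : closure (Submodule.span ℝ D : Set X) ⊆ {x : X | φ₁ x = φ₂ x} :=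
      closure_minimal hsub hclosed
    have huniv : closure (Submodule.span ℝ D : Set X) = Set.univ := by
      have := congrArg (fun p : Submodule ℝ X => (p : Set X)) hD
      simpa [Submodule.topologicalClosure_coe] using this
    ext x
    exact hclsub (huniv ▸ Set.mem_univ x)
  obtain ⟨d, hdD, hdne⟩ := hd
  rcases hdne.lt_or_gt with hlt | hlt
  · exact ⟨d, hdD, φ₁ d, φ₂ d, hlt, interval_sub W ws hws φ₁ φ₂ hn1 hn2 he1 he2 d⟩
  · exact ⟨d, hdD, φ₂ d, φ₁ d, hlt, interval_sub W ws hws φ₂ φ₁ hn2 hn1 he2 he1 d⟩
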